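/- For the Tribonacci sequence and any k ≥ 3: 8·∑_{j=1}^{k} (−1)^{j−1}·T(2j−1)² = (−1)^k·(T(2k)² − 9·T(2k−1)² − 6·T(2k−2)² + T(2k−4)² + T(2k−5)²) + 2. -/

import Mathlib

open Finset

theorem stmt15 (T : ℕ → ℤ) (h0 : T 0 = 0) (h1 : T 1 = 1) (h2 : T 2 = 1) (hT : ∀ n, 3 ≤ n → T n = T (n-1) + T (n-2) + T (n-3)) :
    ∀ k, 3 ≤ k → 8*∑ j ∈ Icc 1 k, (-1:ℤ)^(j-1) * (T (2*j-1))^2 = (-1)^k * ((T (2*k))^2 - 9*(T (2*k-1))^2 - 6*(T (2*k-2))^2 + (T (2*k-4))^2 + (T (2*k-5))^2) + 2 := by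
  intro k hk
  induction k, hk using Nat.le_induction with
  | base =>
    have t3 : T 3 = 2 := by rw [hT 3 (by norm_num)]; norm_num [h0, h1, h2]
    have t4 : T 4 = 4 := by rw [hT 4 (by norm_num)]; norm_num [h1, h2, t3]
    have t5 : T 5 = 7 := by rw [hT 5 (by norm_num)]; norm_num [h2, t3, t4]
    have t6 : T 6 = 13 := by rw [hT 6 (by norm_num)]; norm_num [t3, t4, t5]
    rw [show Icc 1 3 = ({1, 2, 3} : Finset ℕ) from rfl]
    norm_num [Finset.sum_insert, h1, t3, t4, t5, t6]
    rw [h2]; ring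
  | succ k hk ih =>
    have e1 : T (2*k) = T (2*k-1) + T (2*k-2) + T (2*k-3) := hT (2*k) (by omega)
    have e2 : T (2*k+1) = T (2*k) + T (2*k-1) + T (2*k-2) := by
      have h := hT (2*k+1) (by omega)
      rw [show 2*k+1-1 = 2*k by omega, show 2*k+1-2 = 2*k-1 by omega,
        show 2*k+1-3 = 2*k-2 by omega] at h
      exact h
    have e3 : T (2*k+2) = T (2*k+1) + T (2*k) + T (2*k-1) := by
      have h := hT (2*k+2) (by omega)
      rw [show 2*k+2-1 = 2*k+1 by omega, show 2*k+2-2 = 2*k by omega,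
        show 2*k+2-3 = 2*k-1 by omega] at h
      exact h
    have e4 : T (2*k-1) = T (2*k-2) + T (2*k-3) + T (2*k-4) := by
      have h := hT (2*k-1) (by omega)
      rw [show 2*k-1-1 = 2*k-2 by omega, show 2*k-1-2 = 2*k-3 by omega,
        show 2*k-1-3 = 2*k-4 by omega] at h
      exact h
    have e5 : T (2*k-2) = T (2*k-3) + T (2*k-4) + T (2*k-5) := by
      have h := hT (2*k-2) (by omega)
      rw [show 2*k-2-1 = 2*k-3 by omega, show 2*k-2-2 = 2*k-4 by omega,
        show 2*k-2-3 = 2*k-5 by omega] at h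
      exact h
    rw [Finset.sum_Icc_succ_top (by omega : 1 ≤ k + 1),
      show k+1-1 = k by omega, show 2*(k+1) = 2*k+2 by omega,
      show 2*k+2-1 = 2*k+1 by omega, show 2*k+2-2 = 2*k by omega,
      show 2*k+2-4 = 2*k-2 by omega, show 2*k+2-5 = 2*k-3 by omega,
      pow_succ, e3, e2, e1, e4, e5]
    rw [e1, e4, e5] at ih
    linear_combination ih
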